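/- arXiv:1605.09104 — 5 statements merged into one kernel-verified Lean document; each statement's English description precedes it below -/
import Mathlib

section
/- Let t > 0 and let φ, ψ : [0,t] → ℝ be continuous functions. Suppose that for every τ ∈ [0,t], φ(τ)² ≤ φ(0)² + 2 ∫₀^τ |φ(s)| |ψ(s)| ds. Then |φ(t)| ≤ |φ(0)| + ∫₀ᵗ |ψ(s)| ds. (The integral inequality stated before Lemma 2.2 of the paper.) -/
open MeasureTheory Set

theorem stmt_8 (t : ℝ) (ht : 0 < t) (φ ψ : ℝ → ℝ)
    (hφ : ContinuousOn φ (Icc 0 t)) (hψ : ContinuousOn ψ (Icc 0 t))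
    (hineq : ∀ τ ∈ Icc (0:ℝ) t,
      φ τ ^ 2 ≤ φ 0 ^ 2 + 2 * ∫ s in (0:ℝ)..τ, |φ s| * |ψ s|) :
    |φ t| ≤ |φ 0| + ∫ s in (0:ℝ)..t, |ψ s| := by
  have ht' : (0:ℝ) ≤ t := le_of_lt ht
  set g : ℝ → ℝ := fun s => |φ s| * |ψ s| with hg_def
  set a : ℝ → ℝ := fun s => |ψ s| with ha_def
  have hg_cont : ContinuousOn g (Icc 0 t) := (hφ.abs).mul (hψ.abs)
  have ha_cont : ContinuousOn a (Icc 0 t) := hψ.abs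
  have hIcc : ∀ τ ∈ Icc (0:ℝ) t, Icc (0:ℝ) τ ⊆ Icc 0 t := fun τ hτ =>
    Icc_subset_Icc le_rfl hτ.2
  have hg_int : ∀ τ ∈ Icc (0:ℝ) t, IntervalIntegrable g volume 0 τ := by
    intro τ hτ
    apply ContinuousOn.intervalIntegrable
    rw [uIcc_of_le hτ.1]
    exact hg_cont.mono (hIcc τ hτ)
  have ha_int : ∀ τ ∈ Icc (0:ℝ) t, IntervalIntegrable a volume 0 τ := by
    intro τ hτ
    apply ContinuousOn.intervalIntegrable
    rw [uIcc_of_le hτ.1]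
    exact ha_cont.mono (hIcc τ hτ)
  set G : ℝ → ℝ := fun τ => ∫ s in (0:ℝ)..τ, g s with hG_def
  set W : ℝ → ℝ := fun τ => ∫ s in (0:ℝ)..τ, a s with hW_def
  have hG_nonneg : ∀ τ ∈ Icc (0:ℝ) t, 0 ≤ G τ := by
    intro τ hτ
    apply intervalIntegral.integral_nonneg hτ.1
    intro s _
    positivity
  -- continuity of G and W on Icc 0 t
  have hG_contOn : ContinuousOn G (Icc 0 t) := by
    have := intervalIntegral.continuousOn_primitive_interval
      (f := g) (μ := volume) (a := (0:ℝ)) (b := t)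
      ((hg_cont.mono (by rw [uIcc_of_le ht']) ).integrableOn_compact (by
        rw [uIcc_of_le ht']; exact isCompact_Icc))
    rwa [uIcc_of_le ht'] at this
  have hW_contOn : ContinuousOn W (Icc 0 t) := by
    have := intervalIntegral.continuousOn_primitive_interval
      (f := a) (μ := volume) (a := (0:ℝ)) (b := t)
      ((ha_cont.mono (by rw [uIcc_of_le ht']) ).integrableOn_compact (by
        rw [uIcc_of_le ht']; exact isCompact_Icc))
    rwa [uIcc_of_le ht'] at this
  -- derivatives at interior points
  have hmem : ∀ τ ∈ Ioo (0:ℝ) t, Icc (0:ℝ) t ∈ nhds τ := by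
    intro τ hτ
    exact Filter.mem_of_superset (Ioo_mem_nhds hτ.1 hτ.2) Ioo_subset_Icc_self
  have hG_deriv : ∀ τ ∈ Ioo (0:ℝ) t, HasDerivAt G (g τ) τ := by
    intro τ hτ
    refine intervalIntegral.integral_hasDerivAt_right
      (hg_int τ (Ioo_subset_Icc_self hτ)) ?_ ?_
    · exact AEStronglyMeasurable.stronglyMeasurableAtFilter_of_mem
        (hg_cont.aestronglyMeasurable measurableSet_Icc) (hmem τ hτ)
    · exact hg_cont.continuousAt (hmem τ hτ)
  have hW_deriv : ∀ τ ∈ Ioo (0:ℝ) t, HasDerivAt W (a τ) τ := by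
    intro τ hτ
    refine intervalIntegral.integral_hasDerivAt_right
      (ha_int τ (Ioo_subset_Icc_self hτ)) ?_ ?_
    · exact AEStronglyMeasurable.stronglyMeasurableAtFilter_of_mem
        (ha_cont.aestronglyMeasurable measurableSet_Icc) (hmem τ hτ)
    · exact ha_cont.continuousAt (hmem τ hτ)
  -- reduce to ε-version
  rw [show |φ 0| + ∫ s in (0:ℝ)..t, |ψ s| = (|φ 0| + W t) by rfl]
  refine le_of_forall_pos_le_add ?_
  intro ε hε
  set c : ℝ := (|φ 0| + ε) ^ 2 with hc_def
  set v : ℝ → ℝ := fun τ => Real.sqrt (c + 2 * G τ) with hv_def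
  have hc_pos : ∀ τ ∈ Icc (0:ℝ) t, 0 < c + 2 * G τ := by
    intro τ hτ
    have h1 : 0 < c := by positivity
    have := hG_nonneg τ hτ
    linarith
  have hv_pos : ∀ τ ∈ Icc (0:ℝ) t, 0 < v τ :=
    fun τ hτ => Real.sqrt_pos.mpr (hc_pos τ hτ)
  have hφ_le_v : ∀ τ ∈ Icc (0:ℝ) t, |φ τ| ≤ v τ := by
    intro τ hτ
    have h1 := hineq τ hτ
    have h2 : φ 0 ^ 2 ≤ c := by
      have : φ 0 ^ 2 = |φ 0| ^ 2 := (sq_abs _).symm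
      nlinarith [abs_nonneg (φ 0), hε.le]
    have h3 : φ τ ^ 2 ≤ c + 2 * G τ := by
      have : (∫ s in (0:ℝ)..τ, |φ s| * |ψ s|) = G τ := rfl
      linarith [h1, this ▸ h1]
    calc |φ τ| = Real.sqrt (φ τ ^ 2) := by rw [Real.sqrt_sq_eq_abs]
    _ ≤ Real.sqrt (c + 2 * G τ) := Real.sqrt_le_sqrt h3
  -- h is monotone on Icc 0 t
  set h : ℝ → ℝ := fun τ => W τ + v 0 - v τ with hh_def
  have hv_contOn : ContinuousOn v (Icc 0 t) :=
    Real.continuous_sqrt.comp_continuousOn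
      (continuousOn_const.add (continuousOn_const.mul hG_contOn))
  have hh_contOn : ContinuousOn h (Icc 0 t) :=
    (hW_contOn.add continuousOn_const).sub hv_contOn
  have hv_deriv : ∀ τ ∈ Ioo (0:ℝ) t, HasDerivAt v (g τ / v τ) τ := by
    intro τ hτ
    have hτ' := Ioo_subset_Icc_self hτ
    have h1 : HasDerivAt (fun τ => c + 2 * G τ) (2 * g τ) τ :=
      ((hG_deriv τ hτ).const_mul 2).const_add c
    have h2 := (Real.hasDerivAt_sqrt (ne_of_gt (hc_pos τ hτ'))).comp τ h1
    have h3 : (1 / (2 * Real.sqrt (c + 2 * G τ))) * (2 * g τ) = g τ / v τ := by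
      have hv' : v τ = Real.sqrt (c + 2 * G τ) := rfl
      rw [hv']
      field_simp
    rw [← h3]
    exact h2
  have hh_deriv : ∀ τ ∈ Ioo (0:ℝ) t, HasDerivAt h (a τ - g τ / v τ) τ := by
    intro τ hτ
    exact ((hW_deriv τ hτ).add_const (v 0)).sub (hv_deriv τ hτ)
  have hh_mono : MonotoneOn h (Icc 0 t) := by
    apply monotoneOn_of_deriv_nonneg (convex_Icc 0 t) hh_contOn
    · intro τ hτ
      rw [interior_Icc] at hτ
      exact (hh_deriv τ hτ).differentiableAt.differentiableWithinAt
    · intro τ hτ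
      rw [interior_Icc] at hτ
      rw [(hh_deriv τ hτ).deriv]
      have hτ' := Ioo_subset_Icc_self hτ
      have hvp := hv_pos τ hτ'
      have hle : g τ ≤ v τ * a τ := by
        have := hφ_le_v τ hτ'
        have haτ : 0 ≤ a τ := abs_nonneg _
        calc g τ = |φ τ| * a τ := rfl
        _ ≤ v τ * a τ := mul_le_mul_of_nonneg_right this haτ
      rw [sub_nonneg, div_le_iff₀ hvp]
      linarith [hle]
  have h0 : h 0 = 0 := by
    have hW0 : W 0 = 0 := intervalIntegral.integral_same
    simp [hh_def, hW0]
  have hht : 0 ≤ h t := h0 ▸ hh_mono (left_mem_Icc.mpr ht') (right_mem_Icc.mpr ht') ht'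
  have hv0 : v 0 = |φ 0| + ε := by
    have hG0 : G 0 = 0 := intervalIntegral.integral_same
    have : (0:ℝ) ≤ |φ 0| + ε := by positivity
    simp [hv_def, hG0, hc_def, Real.sqrt_sq this]
  have htt : t ∈ Icc (0:ℝ) t := right_mem_Icc.mpr ht'
  have := hφ_le_v t htt
  have : |φ t| ≤ W t + v 0 := by
    have : v t ≤ W t + v 0 := by simp only [hh_def] at hht; linarith
    linarith [hφ_le_v t htt]
  rw [hv0] at this
  linarith
end

section
/- Let T > 0, let H be a real Hilbert space with inner product ⟪·,·⟫ and norm ‖·‖, and let A : H × H → ℝ be a continuous bilinear form. Let v : [0,T] → H be continuously differentiable and let w, g : [0,T] → H be continuous. Assume: (i) for all t ∈ (0,T] and all χ ∈ H, ⟪v'(t), χ⟫ + A(g(t), χ) = ⟪w(t), χ⟫; and (ii) for all t ∈ [0,T], ∫₀ᵗ A(g(s), v(s)) ds ≥ 0. Then for every t ∈ [0,T], ‖v(t)‖ ≤ ‖v(0)‖ + ∫₀ᵗ ‖w(s)‖ ds. (Lemma 2.2 of the paper with κ = 0; there g = 𝓑^α v is the fractional derivative ∂_t^{1−α} v or the fractional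 integral 𝓘^α v, and hypothesis (ii) is the positivity property of these operators with respect to the positive-definite bilinear form A.) -/
open MeasureTheory Set
open scoped RealInnerProductSpace

theorem stmt_9 {H : Type*} [NormedAddCommGroup H] [InnerProductSpace ℝ H] [CompleteSpace H]
    (T : ℝ) (hT : 0 < T)
    (A : H →L[ℝ] H →L[ℝ] ℝ)
    (v v' w g : ℝ → H)
    (hv : ∀ t ∈ Icc (0:ℝ) T, HasDerivAt v (v' t) t)
    (hv' : ContinuousOn v' (Icc 0 T))
    (hw : ContinuousOn w (Icc 0 T))
    (hg : ContinuousOn g (Icc 0 T))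
    (heq : ∀ t ∈ Ioc (0:ℝ) T, ∀ χ : H, ⟪v' t, χ⟫ + A (g t) χ = ⟪w t, χ⟫)
    (hpos : ∀ t ∈ Icc (0:ℝ) T, 0 ≤ ∫ s in (0:ℝ)..t, A (g s) (v s)) :
    ∀ t ∈ Icc (0:ℝ) T, ‖v t‖ ≤ ‖v 0‖ + ∫ s in (0:ℝ)..t, ‖w s‖ := by
  have hvc : ContinuousOn v (Icc 0 T) := fun s hs => (hv s hs).continuousAt.continuousWithinAt
  have hAgv : ContinuousOn (fun s => A (g s) (v s)) (Icc 0 T) := by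
    have : Continuous (fun p : H × H => A p.1 p.2) := A.continuous₂
    exact this.comp_continuousOn (hg.prodMk hvc)
  have hwv : ContinuousOn (fun s => ⟪w s, v s⟫) (Icc 0 T) := hw.inner hvc
  have hnn : ContinuousOn (fun s => ‖w s‖ * ‖v s‖) (Icc 0 T) := hw.norm.mul hvc.norm
  -- Step 1 : the squared energy inequality
  have key : ∀ τ ∈ Icc (0:ℝ) T,
      ‖v τ‖ ^ 2 ≤ ‖v 0‖ ^ 2 + 2 * ∫ s in (0:ℝ)..τ, ‖w s‖ * ‖v s‖ := by
    intro τ hτ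
    have hsub : Icc (0:ℝ) τ ⊆ Icc 0 T := Icc_subset_Icc le_rfl hτ.2
    have huIcc : uIcc (0:ℝ) τ = Icc 0 τ := uIcc_of_le hτ.1
    have hderiv : ∀ x ∈ uIcc (0:ℝ) τ,
        HasDerivAt (fun s => ⟪v s, v s⟫) (⟪v x, v' x⟫ + ⟪v' x, v x⟫) x := by
      intro x hx
      rw [huIcc] at hx
      exact HasDerivAt.inner ℝ (hv x (hsub hx)) (hv x (hsub hx))
    have hint : IntervalIntegrable (fun x => ⟪v x, v' x⟫ + ⟪v' x, v x⟫) volume 0 τ := by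
      apply ContinuousOn.intervalIntegrable
      rw [huIcc]
      exact ((hvc.inner hv').add (hv'.inner hvc)).mono hsub
    have hFTC := intervalIntegral.integral_eq_sub_of_hasDerivAt hderiv hint
    have hcongr : (∫ x in (0:ℝ)..τ, (⟪v x, v' x⟫ + ⟪v' x, v x⟫))
        = ∫ x in (0:ℝ)..τ, (2 * ⟪w x, v x⟫ - 2 * A (g x) (v x)) := by
      apply intervalIntegral.integral_congr_ae
      apply Filter.Eventually.of_forall
      intro x hx
      rw [uIoc_of_le hτ.1] at hx
      have hx' : x ∈ Ioc (0:ℝ) T := ⟨hx.1, hx.2.trans hτ.2⟩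
      have h1 := heq x hx' (v x)
      have h2 : ⟪v x, v' x⟫ = ⟪v' x, v x⟫ := real_inner_comm _ _
      rw [h2]
      linarith
    have hi1 : IntervalIntegrable (fun x => ⟪w x, v x⟫) volume 0 τ :=
      ((hwv.mono hsub).mono (by rw [huIcc])).intervalIntegrable
    have hi2 : IntervalIntegrable (fun x => A (g x) (v x)) volume 0 τ :=
      ((hAgv.mono hsub).mono (by rw [huIcc])).intervalIntegrable
    have hsplit : (∫ x in (0:ℝ)..τ, (2 * ⟪w x, v x⟫ - 2 * A (g x) (v x)))
        = 2 * (∫ x in (0:ℝ)..τ, ⟪w x, v x⟫) - 2 * ∫ x in (0:ℝ)..τ, A (g x) (v x) := by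
      rw [intervalIntegral.integral_sub (hi1.const_mul 2) (hi2.const_mul 2),
        intervalIntegral.integral_const_mul, intervalIntegral.integral_const_mul]
    have hmono : (∫ x in (0:ℝ)..τ, ⟪w x, v x⟫) ≤ ∫ x in (0:ℝ)..τ, ‖w x‖ * ‖v x‖ := by
      apply intervalIntegral.integral_mono_on hτ.1 hi1
      · exact ((hnn.mono hsub).mono (by rw [huIcc])).intervalIntegrable
      · intro x hx
        exact real_inner_le_norm _ _
    have hposτ := hpos τ hτ
    have hsq : ⟪v τ, v τ⟫ = ‖v τ‖ ^ 2 := real_inner_self_eq_norm_sq _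
    have hsq0 : ⟪v 0, v 0⟫ = ‖v 0‖ ^ 2 := real_inner_self_eq_norm_sq _
    rw [hcongr, hsplit, hsq, hsq0] at hFTC
    linarith
  -- Step 2 : sqrt-Gronwall
  intro t ht
  apply le_of_forall_pos_le_add
  intro ε hε
  set c : ℝ := ‖v 0‖ + ε with hc_def
  have hc : 0 < c := by positivity
  set I : ℝ → ℝ := fun τ => ∫ s in (0:ℝ)..τ, ‖w s‖ * ‖v s‖ with hI_def
  set E : ℝ → ℝ := fun τ => c ^ 2 + 2 * I τ with hE_def
  have hInn : ∀ τ ∈ Icc (0:ℝ) T, 0 ≤ I τ := by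
    intro τ hτ
    apply intervalIntegral.integral_nonneg hτ.1
    intro s _; positivity
  have hEpos : ∀ τ ∈ Icc (0:ℝ) T, 0 < E τ := by
    intro τ hτ
    have := hInn τ hτ
    have := hc
    simp only [hE_def]
    nlinarith
  have hvE : ∀ τ ∈ Icc (0:ℝ) T, ‖v τ‖ ≤ Real.sqrt (E τ) := by
    intro τ hτ
    rw [Real.le_sqrt (norm_nonneg _)]
    · have := key τ hτ
      simp only [hE_def]
      nlinarith [hε.le, norm_nonneg (v 0)]
    · exact (hEpos τ hτ).le
  set F : ℝ → ℝ := fun τ => Real.sqrt (E τ) - ∫ s in (0:ℝ)..τ, ‖w s‖ with hF_def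
  have hwvT : IntegrableOn (fun s => ‖w s‖ * ‖v s‖) (Icc 0 T) volume :=
    hnn.integrableOn_Icc
  have hwT : IntegrableOn (fun s => ‖w s‖) (Icc 0 T) volume :=
    hw.norm.integrableOn_Icc
  have huIccT : uIcc (0:ℝ) T = Icc 0 T := uIcc_of_le hT.le
  have hIcont : ContinuousOn I (Icc 0 T) := by
    have := intervalIntegral.continuousOn_primitive_interval
      (f := fun s => ‖w s‖ * ‖v s‖) (a := (0:ℝ)) (b := T) (μ := volume) (by rwa [huIccT])
    rwa [huIccT] at this
  have hWcont : ContinuousOn (fun τ => ∫ s in (0:ℝ)..τ, ‖w s‖) (Icc 0 T) := by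
    have := intervalIntegral.continuousOn_primitive_interval
      (f := fun s => ‖w s‖) (a := (0:ℝ)) (b := T) (μ := volume) (by rwa [huIccT])
    rwa [huIccT] at this
  have hFcont : ContinuousOn F (Icc 0 T) := by
    apply ContinuousOn.sub
    · exact Real.continuous_sqrt.comp_continuousOn
        (continuousOn_const.add (continuousOn_const.mul hIcont))
    · exact hWcont
  -- derivative of F on the interior
  have hFderiv : ∀ x ∈ Ioo (0:ℝ) T,
      HasDerivAt F (2 * (‖w x‖ * ‖v x‖) / (2 * Real.sqrt (E x)) - ‖w x‖) x := by
    intro x hx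
    have hnx : Icc (0:ℝ) T ∈ nhds x := Icc_mem_nhds hx.1 hx.2
    have hxI : x ∈ Icc (0:ℝ) T := ⟨hx.1.le, hx.2.le⟩
    have hca1 : ContinuousAt (fun s => ‖w s‖ * ‖v s‖) x := hnn.continuousAt hnx
    have hca2 : ContinuousAt (fun s => ‖w s‖) x := hw.norm.continuousAt hnx
    have hm1 : StronglyMeasurableAtFilter (fun s => ‖w s‖ * ‖v s‖) (nhds x) :=
      ⟨Icc 0 T, hnx, (hwvT).aestronglyMeasurable⟩
    have hm2 : StronglyMeasurableAtFilter (fun s => ‖w s‖) (nhds x) :=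
      ⟨Icc 0 T, hnx, (hwT).aestronglyMeasurable⟩
    have hint1 : IntervalIntegrable (fun s => ‖w s‖ * ‖v s‖) volume 0 x := by
      apply ContinuousOn.intervalIntegrable
      exact hnn.mono (by rw [uIcc_of_le hx.1.le]; exact Icc_subset_Icc le_rfl hx.2.le)
    have hint2 : IntervalIntegrable (fun s => ‖w s‖) volume 0 x := by
      apply ContinuousOn.intervalIntegrable
      exact hw.norm.mono (by rw [uIcc_of_le hx.1.le]; exact Icc_subset_Icc le_rfl hx.2.le)
    have hI' : HasDerivAt I (‖w x‖ * ‖v x‖) x :=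
      intervalIntegral.integral_hasDerivAt_right hint1 hm1 hca1
    have hE' : HasDerivAt E (2 * (‖w x‖ * ‖v x‖)) x := (hI'.const_mul 2).const_add (c ^ 2)
    have hS : HasDerivAt (fun τ => Real.sqrt (E τ))
        (2 * (‖w x‖ * ‖v x‖) / (2 * Real.sqrt (E x))) x :=
      hE'.sqrt (ne_of_gt (hEpos x hxI))
    have hW' : HasDerivAt (fun τ => ∫ s in (0:ℝ)..τ, ‖w s‖) (‖w x‖) x :=
      intervalIntegral.integral_hasDerivAt_right hint2 hm2 hca2
    exact hS.sub hW'
  have hanti : AntitoneOn F (Icc 0 T) := by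
    apply antitoneOn_of_deriv_nonpos (convex_Icc 0 T) hFcont
    · intro x hx
      rw [interior_Icc] at hx
      exact ((hFderiv x hx).differentiableAt).differentiableWithinAt
    · intro x hx
      rw [interior_Icc] at hx
      rw [(hFderiv x hx).deriv]
      have hxI : x ∈ Icc (0:ℝ) T := ⟨hx.1.le, hx.2.le⟩
      have h1 := hvE x hxI
      have h2 := hEpos x hxI
      have h3 : 0 < Real.sqrt (E x) := Real.sqrt_pos.mpr h2
      rw [sub_nonpos, div_le_iff₀ (by positivity)]
      have := norm_nonneg (w x)
      nlinarith
  have hFt : F t ≤ F 0 := hanti ⟨le_rfl, hT.le⟩ ht ht.1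
  have hvt := hvE t ht
  have hE0 : Real.sqrt (E 0) = c := by
    simp only [hE_def, hI_def, intervalIntegral.integral_same, mul_zero, add_zero]
    exact Real.sqrt_sq hc.le
  simp only [hF_def, intervalIntegral.integral_same, sub_zero, hE0] at hFt
  simp only [hc_def] at hFt
  linarith
end

section
/- Let T > 0, let H be a real Hilbert space with inner product ⟪·,·⟫ and norm ‖·‖, and let A : H × H → ℝ be a continuous bilinear form. Let v, w, g : [0,T] → H be continuous. Assume: (i) for all t ∈ [0,T] and all χ ∈ H, ⟪v(t), χ⟫ + A(g(t), χ) = ⟪w(t), χ⟫; and (ii) for all t ∈ [0,T], ∫₀ᵗ A(g(s), v(s)) ds ≥ 0. Then for every t ∈ [0,T], ∫₀ᵗ ‖v(s)‖² ds ≤ ∫₀ᵗ ‖w(s)‖² ds. (Lemma 2.2 of the paper with κ = 1; there g = 𝓘^α v and hypothesis (ii) is the positivity property of the fractional integral with respect to the positive-definite bilinear form A.) -/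
open MeasureTheory Set
open scoped RealInnerProductSpace

theorem stmt_10 {H : Type*} [NormedAddCommGroup H] [InnerProductSpace ℝ H] [CompleteSpace H]
    (T : ℝ) (hT : 0 < T)
    (A : H →L[ℝ] H →L[ℝ] ℝ)
    (v w g : ℝ → H)
    (hv : ContinuousOn v (Icc 0 T))
    (hw : ContinuousOn w (Icc 0 T))
    (hg : ContinuousOn g (Icc 0 T))
    (heq : ∀ t ∈ Icc (0:ℝ) T, ∀ χ : H, ⟪v t, χ⟫ + A (g t) χ = ⟪w t, χ⟫)
    (hpos : ∀ t ∈ Icc (0:ℝ) T, 0 ≤ ∫ s in (0:ℝ)..t, A (g s) (v s)) :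
    ∀ t ∈ Icc (0:ℝ) T,
      ∫ s in (0:ℝ)..t, ‖v s‖ ^ 2 ≤ ∫ s in (0:ℝ)..t, ‖w s‖ ^ 2 := by
  intro t ht
  obtain ⟨ht0, htT⟩ := ht
  have hsub : uIcc (0:ℝ) t ⊆ Icc 0 T := by
    rw [uIcc_of_le ht0]
    exact Icc_subset_Icc le_rfl htT
  -- Integrability of the three integrands
  have hcv2 : IntervalIntegrable (fun s => ‖v s‖ ^ 2) volume 0 t :=
    ((hv.norm.pow 2).mono hsub).intervalIntegrable
  have hcw2 : IntervalIntegrable (fun s => ‖w s‖ ^ 2) volume 0 t :=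
    ((hw.norm.pow 2).mono hsub).intervalIntegrable
  have hcA : ContinuousOn (fun s => A (g s) (v s)) (Icc 0 T) := by
    have : ContinuousOn (fun s => (A (g s), v s)) (Icc 0 T) :=
      ((A.continuous.comp_continuousOn hg).prodMk hv)
    exact (isBoundedBilinearMap_apply.continuous).comp_continuousOn this
  have hcAi : IntervalIntegrable (fun s => A (g s) (v s)) volume 0 t :=
    (hcA.mono hsub).intervalIntegrable
  -- Pointwise bound: ‖v s‖² ≤ ‖w s‖² - 2 * A (g s) (v s)
  have hpt : ∀ s ∈ Icc 0 t, ‖v s‖ ^ 2 ≤ ‖w s‖ ^ 2 - 2 * A (g s) (v s) := by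
    intro s hs
    have hsT : s ∈ Icc (0:ℝ) T := ⟨hs.1, hs.2.trans htT⟩
    have h1 : ‖v s‖ ^ 2 + A (g s) (v s) = ⟪w s, v s⟫ := by
      have := heq s hsT (v s)
      rwa [real_inner_self_eq_norm_sq] at this
    have h2 : ⟪w s, v s⟫ ≤ (‖w s‖ ^ 2 + ‖v s‖ ^ 2) / 2 := by
      have := real_inner_le_norm (w s) (v s)
      nlinarith [sq_nonneg (‖w s‖ - ‖v s‖), norm_nonneg (w s), norm_nonneg (v s)]
    nlinarith
  have hmono : ∫ s in (0:ℝ)..t, ‖v s‖ ^ 2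
      ≤ ∫ s in (0:ℝ)..t, (‖w s‖ ^ 2 - 2 * A (g s) (v s)) :=
    intervalIntegral.integral_mono_on ht0 hcv2 (hcw2.sub (hcAi.const_mul 2)) hpt
  have hsplit : ∫ s in (0:ℝ)..t, (‖w s‖ ^ 2 - 2 * A (g s) (v s))
      = (∫ s in (0:ℝ)..t, ‖w s‖ ^ 2) - 2 * ∫ s in (0:ℝ)..t, A (g s) (v s) := by
    rw [intervalIntegral.integral_sub hcw2 (hcAi.const_mul 2),
      intervalIntegral.integral_const_mul]
  have hA := hpos t ⟨ht0, htT⟩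
  linarith [hmono, hsplit]
end

section
/- Let T > 0, let H be a real Hilbert space with inner product ⟪·,·⟫ and norm ‖·‖, and let A : H × H → ℝ be a continuous bilinear form. Let θ, ρ : [0,T] → H be continuously differentiable and let g : [0,T] → H be continuous. Assume: (i) for all t ∈ (0,T] and all χ ∈ H, ⟪θ'(t), χ⟫ + A(g(t), χ) = ⟪ρ'(t), χ⟫; and (ii) for all t ∈ [0,T], ∫₀ᵗ A(g(s), θ(s)) ds ≥ 0. Then for every t ∈ (0,T], the error e(t) := ρ(t) − θ(t) satisfies ‖e(t)‖ ≤ ‖θ(0)‖ + ∫₀ᵗ ‖ρ'(s)‖ ds + ‖ρ(t)‖. (Theorem 3.1 of the paper: there θ = u_h − R_h u, ρ = u − R_h u, e = u − u_h, g = ∂_t^{1−α} θ, and hypothesis (ii) is the positivity property of the Riemann–Liouville derivative with respect to the positive-definite bilinear form A.) -/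
open MeasureTheory Set
open scoped RealInnerProductSpace

private lemma le_add_eps_real {a b : ℝ} (h : ∀ ε > (0:ℝ), a ≤ b + ε) : a ≤ b := by
  by_contra hc
  push_neg at hc
  have := h ((a - b) / 2) (by linarith)
  linarith

theorem stmt_11 {H : Type*} [NormedAddCommGroup H] [InnerProductSpace ℝ H] [CompleteSpace H]
    (T : ℝ) (hT : 0 < T)
    (A : H →L[ℝ] H →L[ℝ] ℝ)
    (θ θ' ρ ρ' g : ℝ → H)
    (hθ : ∀ t ∈ Icc (0:ℝ) T, HasDerivAt θ (θ' t) t)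
    (hθ' : ContinuousOn θ' (Icc 0 T))
    (hρ : ∀ t ∈ Icc (0:ℝ) T, HasDerivAt ρ (ρ' t) t)
    (hρ' : ContinuousOn ρ' (Icc 0 T))
    (hg : ContinuousOn g (Icc 0 T))
    (heq : ∀ t ∈ Ioc (0:ℝ) T, ∀ χ : H, ⟪θ' t, χ⟫ + A (g t) χ = ⟪ρ' t, χ⟫)
    (hpos : ∀ t ∈ Icc (0:ℝ) T, 0 ≤ ∫ s in (0:ℝ)..t, A (g s) (θ s)) :
    ∀ t ∈ Ioc (0:ℝ) T,
      ‖ρ t - θ t‖ ≤ ‖θ 0‖ + (∫ s in (0:ℝ)..t, ‖ρ' s‖) + ‖ρ t‖ := by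
  -- continuity facts
  have hcθ : ContinuousOn θ (Icc 0 T) := fun s hs =>
    (hθ s hs).continuousAt.continuousWithinAt
  have hcρ'n : ContinuousOn (fun s => ‖ρ' s‖) (Icc 0 T) := hρ'.norm
  have hcmul : ContinuousOn (fun s => ‖ρ' s‖ * ‖θ s‖) (Icc 0 T) := hcρ'n.mul hcθ.norm
  have hcA : ContinuousOn (fun s => A (g s) (θ s)) (Icc 0 T) :=
    (A.continuous.comp_continuousOn hg).clm_apply hcθ
  have hcip : ContinuousOn (fun s => ⟪ρ' s, θ s⟫) (Icc 0 T) := hρ'.inner hcθ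
  have hciθ : ContinuousOn (fun s => ⟪θ' s, θ s⟫) (Icc 0 T) := hθ'.inner hcθ
  -- abbreviations
  set ψ : ℝ → ℝ := fun t => ∫ s in (0:ℝ)..t, ‖ρ' s‖ * ‖θ s‖ with hψdef
  -- Energy inequality
  have energy : ∀ t ∈ Icc (0:ℝ) T, ‖θ t‖ ^ 2 ≤ ‖θ 0‖ ^ 2 + 2 * ψ t := by
    intro t ht
    have hsub : Icc (0:ℝ) t ⊆ Icc 0 T := Icc_subset_Icc le_rfl ht.2
    have huIcc : uIcc (0:ℝ) t = Icc 0 t := uIcc_of_le ht.1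
    have hderiv : ∀ s ∈ uIcc (0:ℝ) t,
        HasDerivAt (fun u => ⟪θ u, θ u⟫) (2 * ⟪θ' s, θ s⟫) s := by
      intro s hs
      rw [huIcc] at hs
      have h := (hθ s (hsub hs)).inner ℝ (hθ s (hsub hs))
      refine h.congr_deriv ?_
      rw [real_inner_comm (θ s) (θ' s)]
      ring
    have hint : IntervalIntegrable (fun s => 2 * ⟪θ' s, θ s⟫) volume 0 t := by
      apply ContinuousOn.intervalIntegrable
      rw [huIcc]
      exact (continuousOn_const.mul (hciθ.mono hsub))
    have hFTC : ∫ s in (0:ℝ)..t, 2 * ⟪θ' s, θ s⟫ = ⟪θ t, θ t⟫ - ⟪θ 0, θ 0⟫ :=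
      intervalIntegral.integral_eq_sub_of_hasDerivAt hderiv hint
    have hi1 : IntervalIntegrable (fun s => ⟪ρ' s, θ s⟫) volume 0 t := by
      apply ContinuousOn.intervalIntegrable; rw [huIcc]; exact hcip.mono hsub
    have hi2 : IntervalIntegrable (fun s => A (g s) (θ s)) volume 0 t := by
      apply ContinuousOn.intervalIntegrable; rw [huIcc]; exact hcA.mono hsub
    have hiψ : IntervalIntegrable (fun s => ‖ρ' s‖ * ‖θ s‖) volume 0 t := by
      apply ContinuousOn.intervalIntegrable; rw [huIcc]; exact hcmul.mono hsub
    have hcongr : ∫ s in (0:ℝ)..t, 2 * ⟪θ' s, θ s⟫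
        = ∫ s in (0:ℝ)..t, (2 * ⟪ρ' s, θ s⟫ - 2 * A (g s) (θ s)) := by
      apply intervalIntegral.integral_congr_ae
      apply Filter.Eventually.of_forall
      intro s hs
      rw [uIoc_of_le ht.1] at hs
      have hsT : s ∈ Ioc (0:ℝ) T := ⟨hs.1, hs.2.trans ht.2⟩
      have := heq s hsT (θ s)
      linarith
    have hsplit : ∫ s in (0:ℝ)..t, (2 * ⟪ρ' s, θ s⟫ - 2 * A (g s) (θ s))
        = 2 * (∫ s in (0:ℝ)..t, ⟪ρ' s, θ s⟫) - 2 * ∫ s in (0:ℝ)..t, A (g s) (θ s) := by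
      rw [intervalIntegral.integral_sub (hi1.const_mul 2) (hi2.const_mul 2),
        intervalIntegral.integral_const_mul, intervalIntegral.integral_const_mul]
    have hmono : (∫ s in (0:ℝ)..t, ⟪ρ' s, θ s⟫) ≤ ψ t := by
      exact intervalIntegral.integral_mono_on ht.1 hi1 hiψ
        (fun s hs => real_inner_le_norm _ _)
    have hA : 0 ≤ ∫ s in (0:ℝ)..t, A (g s) (θ s) := hpos t ht
    have h1 : ⟪θ t, θ t⟫ - ⟪θ 0, θ 0⟫ ≤ 2 * ψ t := by
      rw [← hFTC, hcongr, hsplit]; linarith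
    have h2 : ⟪θ t, θ t⟫ = ‖θ t‖ ^ 2 := real_inner_self_eq_norm_sq _
    have h3 : ⟪θ 0, θ 0⟫ = ‖θ 0‖ ^ 2 := real_inner_self_eq_norm_sq _
    linarith [h1, h2.symm, h3.symm]
  -- main argument
  intro t₀ ht₀
  have ht₀' : t₀ ∈ Icc (0:ℝ) T := ⟨ht₀.1.le, ht₀.2⟩
  have hsub₀ : Icc (0:ℝ) t₀ ⊆ Icc 0 T := Icc_subset_Icc le_rfl ht₀.2
  have huIcc₀ : uIcc (0:ℝ) t₀ = Icc 0 t₀ := uIcc_of_le ht₀.1.le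
  set P : ℝ → ℝ := fun t => ∫ s in (0:ℝ)..t, ‖ρ' s‖ with hPdef
  have main : ‖θ t₀‖ ≤ ‖θ 0‖ + P t₀ := by
    apply le_add_eps_real
    intro ε hε
    set c : ℝ := ‖θ 0‖ + ε with hcdef
    have hc0 : (0:ℝ) < c := add_pos_of_nonneg_of_pos (norm_nonneg _) hε
    set F : ℝ → ℝ := fun t => c ^ 2 + 2 * ψ t with hFdef
    set G : ℝ → ℝ := fun t => Real.sqrt (F t) with hGdef
    -- nonnegativity of ψ on [0, t₀]
    have hψnn : ∀ t ∈ Icc (0:ℝ) t₀, 0 ≤ ψ t := by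
      intro t ht
      exact intervalIntegral.integral_nonneg ht.1
        (fun s _ => mul_nonneg (norm_nonneg _) (norm_nonneg _))
    have hFpos : ∀ t ∈ Icc (0:ℝ) t₀, 0 < F t := by
      intro t ht
      have := hψnn t ht
      simp only [hFdef]
      nlinarith
    have hθleG : ∀ t ∈ Icc (0:ℝ) t₀, ‖θ t‖ ≤ G t := by
      intro t ht
      have h1 := energy t (hsub₀ ht)
      have hcc : ‖θ 0‖ ^ 2 ≤ c ^ 2 := by
        rw [hcdef]; nlinarith [norm_nonneg (θ 0), hε.le]
      have h2 : ‖θ t‖ ^ 2 ≤ F t := by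
        simp only [hFdef]; nlinarith
      rw [hGdef, ← Real.sqrt_sq (norm_nonneg (θ t))]
      exact Real.sqrt_le_sqrt h2
    -- continuity on [0, t₀]
    have hPcont : ContinuousOn P (Icc 0 t₀) := by
      have : IntegrableOn (fun s => ‖ρ' s‖) (uIcc 0 t₀) volume := by
        rw [huIcc₀]; exact ((hcρ'n.mono hsub₀).integrableOn_Icc)
      have := intervalIntegral.continuousOn_primitive_interval this
      rwa [huIcc₀] at this
    have hψcont : ContinuousOn ψ (Icc 0 t₀) := by
      have : IntegrableOn (fun s => ‖ρ' s‖ * ‖θ s‖) (uIcc 0 t₀) volume := by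
        rw [huIcc₀]; exact ((hcmul.mono hsub₀).integrableOn_Icc)
      have := intervalIntegral.continuousOn_primitive_interval this
      rwa [huIcc₀] at this
    have hGcont : ContinuousOn G (Icc 0 t₀) :=
      Real.continuous_sqrt.comp_continuousOn
        (continuousOn_const.add (continuousOn_const.mul hψcont))
    set φ : ℝ → ℝ := fun t => (c + P t) - G t with hφdef
    have hφcont : ContinuousOn φ (Icc 0 t₀) :=
      (continuousOn_const.add hPcont).sub hGcont
    -- derivative of φ on the interior
    set d : ℝ → ℝ := fun t => ‖ρ' t‖ - ‖ρ' t‖ * ‖θ t‖ / G t with hddef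
    have hφderiv : ∀ t ∈ Ioo (0:ℝ) t₀, HasDerivAt φ (d t) t := by
      intro t ht
      have htIcc : t ∈ Icc (0:ℝ) t₀ := ⟨ht.1.le, ht.2.le⟩
      have htT : t < T := lt_of_lt_of_le ht.2 ht₀.2
      have hnhds : Icc (0:ℝ) T ∈ nhds t := Icc_mem_nhds ht.1 htT
      have hiP : IntervalIntegrable (fun s => ‖ρ' s‖) volume 0 t := by
        apply ContinuousOn.intervalIntegrable
        rw [uIcc_of_le ht.1.le]
        exact hcρ'n.mono (Icc_subset_Icc le_rfl htT.le)
      have hiψ : IntervalIntegrable (fun s => ‖ρ' s‖ * ‖θ s‖) volume 0 t := by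
        apply ContinuousOn.intervalIntegrable
        rw [uIcc_of_le ht.1.le]
        exact hcmul.mono (Icc_subset_Icc le_rfl htT.le)
      have hmP : StronglyMeasurableAtFilter (fun s => ‖ρ' s‖) (nhds t) volume :=
        ⟨Icc 0 T, hnhds, hcρ'n.aestronglyMeasurable measurableSet_Icc⟩
      have hmψ : StronglyMeasurableAtFilter (fun s => ‖ρ' s‖ * ‖θ s‖) (nhds t) volume :=
        ⟨Icc 0 T, hnhds, hcmul.aestronglyMeasurable measurableSet_Icc⟩
      have hP' : HasDerivAt P (‖ρ' t‖) t :=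
        intervalIntegral.integral_hasDerivAt_right hiP hmP (hcρ'n.continuousAt hnhds)
      have hψ' : HasDerivAt ψ (‖ρ' t‖ * ‖θ t‖) t :=
        intervalIntegral.integral_hasDerivAt_right hiψ hmψ (hcmul.continuousAt hnhds)
      have hF' : HasDerivAt F (2 * (‖ρ' t‖ * ‖θ t‖)) t :=
        ((hψ'.const_mul 2).const_add (c ^ 2))
      have hFne : F t ≠ 0 := (hFpos t htIcc).ne'
      have hsq := (Real.hasDerivAt_sqrt hFne).comp t hF'
      have hG' : HasDerivAt G (‖ρ' t‖ * ‖θ t‖ / G t) t := by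
        refine hsq.congr_deriv ?_
        have hGpos : 0 < Real.sqrt (F t) := Real.sqrt_pos.2 (hFpos t htIcc)
        rw [show G t = Real.sqrt (F t) from rfl]
        field_simp [hGdef]
      have := ((hP'.const_add c).sub hG')
      exact this
    -- φ is monotone, so φ 0 ≤ φ t₀
    have hmonoφ : MonotoneOn φ (Icc 0 t₀) := by
      apply monotoneOn_of_hasDerivWithinAt_nonneg (convex_Icc 0 t₀) hφcont
        (f' := d)
      · intro x hx
        rw [interior_Icc] at hx
        exact (hφderiv x hx).hasDerivWithinAt
      · intro x hx
        rw [interior_Icc] at hx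
        have hxIcc : x ∈ Icc (0:ℝ) t₀ := ⟨hx.1.le, hx.2.le⟩
        have hGpos : 0 < G x := Real.sqrt_pos.2 (hFpos x hxIcc)
        have hle : ‖θ x‖ / G x ≤ 1 := (div_le_one hGpos).2 (hθleG x hxIcc)
        have hr : (0:ℝ) ≤ ‖ρ' x‖ := norm_nonneg _
        have : ‖ρ' x‖ * ‖θ x‖ / G x = ‖ρ' x‖ * (‖θ x‖ / G x) := by ring
        simp only [hddef, this]
        nlinarith
    have h0mem : (0:ℝ) ∈ Icc (0:ℝ) t₀ := ⟨le_rfl, ht₀.1.le⟩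
    have ht₀mem : t₀ ∈ Icc (0:ℝ) t₀ := ⟨ht₀.1.le, le_rfl⟩
    have hφ0 : φ 0 = 0 := by
      have hψ0 : ψ 0 = 0 := intervalIntegral.integral_same
      have hP0 : P 0 = 0 := intervalIntegral.integral_same
      simp [hφdef, hGdef, hFdef, hψ0, hP0, Real.sqrt_sq hc0.le]
    have := hmonoφ h0mem ht₀mem ht₀.1.le
    rw [hφ0] at this
    have hGle : G t₀ ≤ c + P t₀ := by simp only [hφdef] at this; linarith
    have := hθleG t₀ ht₀mem
    simp only [hcdef] at hGle
    linarith
  have htri : ‖ρ t₀ - θ t₀‖ ≤ ‖ρ t₀‖ + ‖θ t₀‖ := norm_sub_le _ _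
  linarith
end

section
/- Let 0 < α < 1, T > 0, let H be a real Hilbert space with inner product ⟪·,·⟫ and norm ‖·‖, and let A : H × H → ℝ be a continuous bilinear form. Let θ, ρ : [0,T] → H be continuous functions. Assume: (i) for all t ∈ [0,T] and all χ ∈ H, ⟪θ(t), χ⟫ + A(𝓘^α θ(t), χ) = ⟪ρ(t), χ⟫; and (ii) for every continuous ψ : [0,T] → H and every t ∈ [0,T], ∫₀ᵗ A(𝓘^α ψ(s), ψ(s)) ds ≥ 0. Then for every t ∈ [0,T], ∫₀ᵗ s² ‖θ(s)‖² ds ≤ 3 ∫₀ᵗ ( s² ‖ρ(s)‖² + 2 (∫₀ˢ ‖ρ(r)‖ dr)² ) ds. (Lemma 4.2 of the paper.) -/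
open MeasureTheory Set
open scoped RealInnerProductSpace

set_option maxHeartbeats 1000000

/-- Riemann–Liouville fractional integral of order `α` of a
Banach-space-valued function `φ`. -/
noncomputable def RL {H : Type*} [NormedAddCommGroup H] [NormedSpace ℝ H]
    (α : ℝ) (φ : ℝ → H) (t : ℝ) : H :=
  ∫ s in (0:ℝ)..t, (((t - s) ^ (α - 1)) / Real.Gamma α) • φ s

namespace Stmt12Aux

variable {H : Type*} [NormedAddCommGroup H] [NormedSpace ℝ H]

lemma rpow_eval {β : ℝ} (hβ : 0 < β) {a b : ℝ} (hab : a ≤ b) :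
    (∫ s in a..b, (b - s) ^ (β - 1)) = (b - a) ^ β / β := by
  rw [intervalIntegral.integral_comp_sub_left (fun x => x ^ (β - 1)) b, sub_self,
    integral_rpow (Or.inl (by linarith : (-1:ℝ) < β - 1))]
  have h1 : β - 1 + 1 = β := by ring
  rw [h1, Real.zero_rpow hβ.ne', sub_zero]

lemma rpow_eval' {β : ℝ} (hβ : 0 < β) {r b : ℝ} (hrb : r ≤ b) :
    (∫ s in r..b, (s - r) ^ (β - 1)) = (b - r) ^ β / β := by
  rw [intervalIntegral.integral_comp_sub_right (fun x => x ^ (β - 1)) r, sub_self,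
    integral_rpow (Or.inl (by linarith : (-1:ℝ) < β - 1))]
  have h1 : β - 1 + 1 = β := by ring
  rw [h1, Real.zero_rpow hβ.ne', sub_zero]

lemma ker_ii {β : ℝ} (hβ : 0 < β) {b : ℝ} (hb : 0 ≤ b) :
    IntervalIntegrable (fun s => (b - s) ^ (β - 1)) volume 0 b := by
  have h := (intervalIntegral.intervalIntegrable_rpow' (a := 0) (b := b)
    (by linarith : (-1:ℝ) < β - 1)).comp_sub_left b
  simpa using h.symm

lemma RL_integrand_ii {β : ℝ} (hβ : 0 < β) {φ : ℝ → H} (hφ : Continuous φ)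
    {b : ℝ} (hb : 0 ≤ b) (c : ℝ) :
    IntervalIntegrable (fun r => ((b - r) ^ (β - 1) / c) • φ r) volume 0 b := by
  obtain ⟨M, hM⟩ := isCompact_Icc.exists_bound_of_continuousOn
    (hφ.continuousOn : ContinuousOn φ (Icc 0 b))
  rw [intervalIntegrable_iff_integrableOn_Ioc_of_le hb]
  have hker : IntegrableOn (fun r => (b - r) ^ (β - 1)) (Ioc 0 b) volume :=
    (intervalIntegrable_iff_integrableOn_Ioc_of_le hb).mp (ker_ii hβ hb)
  refine Integrable.mono' ((hker.div_const |c|).mul_const M) ?_ ?_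
  · exact ((((measurable_const.sub measurable_id).pow measurable_const).div_const
      c).aestronglyMeasurable.smul hφ.aestronglyMeasurable).restrict
  · refine (ae_restrict_iff' measurableSet_Ioc).mpr (Filter.Eventually.of_forall fun r hr => ?_)
    have h1 : 0 ≤ (b - r) ^ (β - 1) := Real.rpow_nonneg (by linarith [hr.2]) _
    have h2 : ‖φ r‖ ≤ M := hM r ⟨hr.1.le, hr.2⟩
    rw [norm_smul, Real.norm_eq_abs, abs_div, abs_of_nonneg h1]
    exact mul_le_mul le_rfl h2 (norm_nonneg _) (div_nonneg h1 (abs_nonneg c))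

lemma indicator_slice {t s : ℝ} (K : ℝ → ℝ → ℝ) (φ : ℝ → H) (hs : s ∈ Ioo (0:ℝ) t) :
    (fun r => ({p : ℝ × ℝ | 0 < p.2 ∧ p.2 < p.1 ∧ p.1 < t}).indicator
      (fun p => K p.1 p.2 • φ p.2) (s, r)) = (Ioo (0:ℝ) s).indicator (fun r => K s r • φ r) := by
  funext r
  by_cases hr : r ∈ Ioo (0:ℝ) s
  · rw [Set.indicator_of_mem (show ((s, r) : ℝ × ℝ) ∈ {p : ℝ × ℝ | 0 < p.2 ∧ p.2 < p.1 ∧ p.1 < t} from ⟨hr.1, hr.2, hs.2⟩),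
      Set.indicator_of_mem hr]
  · rw [Set.indicator_of_notMem (fun h => hr ⟨h.1, h.2.1⟩), Set.indicator_of_notMem hr]

lemma indicator_slice_zero {t s : ℝ} (K : ℝ → ℝ → ℝ) (φ : ℝ → H) (hs : s ∉ Ioo (0:ℝ) t) :
    (fun r => ({p : ℝ × ℝ | 0 < p.2 ∧ p.2 < p.1 ∧ p.1 < t}).indicator
      (fun p => K p.1 p.2 • φ p.2) (s, r)) = fun _ => (0 : H) := by
  funext r
  exact Set.indicator_of_notMem (fun h => hs ⟨lt_trans h.1 h.2.1, h.2.2⟩) _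

lemma hF_integrable {t : ℝ} (K : ℝ → ℝ → ℝ) {φ : ℝ → H} (hφ : Continuous φ)
    {M : ℝ} (hM : ∀ x, ‖φ x‖ ≤ M)
    (hKmeas : Measurable fun p : ℝ × ℝ => K p.1 p.2)
    (hKnn : ∀ ⦃s r : ℝ⦄, 0 < r → r < s → s < t → 0 ≤ K s r)
    (hKint : ∀ s ∈ Ioo (0:ℝ) t, IntegrableOn (fun r => K s r) (Ioo 0 s) volume)
    {D : ℝ → ℝ} (hD : IntegrableOn D (Ioo 0 t) volume)
    (hKD : ∀ s ∈ Ioo (0:ℝ) t, (∫ r in Ioo (0:ℝ) s, K s r) ≤ D s) :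
    Integrable (({p : ℝ × ℝ | 0 < p.2 ∧ p.2 < p.1 ∧ p.1 < t}).indicator
      fun p => K p.1 p.2 • φ p.2) (volume.prod volume) := by
  have hM0 : 0 ≤ M := le_trans (norm_nonneg _) (hM 0)
  have hS : MeasurableSet {p : ℝ × ℝ | 0 < p.2 ∧ p.2 < p.1 ∧ p.1 < t} := by
    have h1 : MeasurableSet {p : ℝ × ℝ | 0 < p.2} :=
      measurableSet_lt measurable_const measurable_snd
    have h2 : MeasurableSet {p : ℝ × ℝ | p.2 < p.1} :=
      measurableSet_lt measurable_snd measurable_fst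
    have h3 : MeasurableSet {p : ℝ × ℝ | p.1 < t} :=
      measurableSet_lt measurable_fst measurable_const
    exact h1.inter (h2.inter h3)
  have hmeas : AEStronglyMeasurable (({p : ℝ × ℝ | 0 < p.2 ∧ p.2 < p.1 ∧ p.1 < t}).indicator
      fun p => K p.1 p.2 • φ p.2) (volume.prod volume) :=
    (hKmeas.aestronglyMeasurable.smul
      ((hφ.comp continuous_snd).aestronglyMeasurable)).indicator hS
  have hslice : ∀ s ∈ Ioo (0:ℝ) t,
      Integrable ((Ioo (0:ℝ) s).indicator (fun r => K s r • φ r)) volume := by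
    intro s hs
    rw [integrable_indicator_iff measurableSet_Ioo]
    refine Integrable.mono' ((hKint s hs).mul_const M)
      ((hKint s hs).aestronglyMeasurable.smul hφ.aestronglyMeasurable.restrict) ?_
    refine (ae_restrict_iff' measurableSet_Ioo).mpr (Filter.Eventually.of_forall fun r hr => ?_)
    rw [norm_smul, Real.norm_eq_abs, abs_of_nonneg (hKnn hr.1 hr.2 hs.2)]
    exact mul_le_mul_of_nonneg_left (hM r) (hKnn hr.1 hr.2 hs.2)
  rw [integrable_prod_iff hmeas]
  constructor
  · refine Filter.Eventually.of_forall fun s => ?_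
    by_cases hs : s ∈ Ioo (0:ℝ) t
    · rw [indicator_slice K φ hs]
      exact hslice s hs
    · rw [indicator_slice_zero K φ hs]
      exact integrable_zero _ _ _
  · refine Integrable.mono'
      ((integrable_indicator_iff measurableSet_Ioo).mpr (hD.const_mul M))
      hmeas.norm.integral_prod_right' (Filter.Eventually.of_forall fun s => ?_)
    by_cases hs : s ∈ Ioo (0:ℝ) t
    · have h1 := indicator_slice (t := t) K φ hs
      have he : (∫ r, ‖({p : ℝ × ℝ | 0 < p.2 ∧ p.2 < p.1 ∧ p.1 < t}).indicator
            (fun p => K p.1 p.2 • φ p.2) (s, r)‖)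
          = ∫ r in Ioo (0:ℝ) s, ‖K s r • φ r‖ := by
        rw [← integral_indicator measurableSet_Ioo]
        refine congrArg (fun f : ℝ → ℝ => ∫ r, f r) ?_
        funext r
        rw [congrFun h1 r, norm_indicator_eq_indicator_norm]
      rw [he, Set.indicator_of_mem hs]
      have hInt1 : IntegrableOn (fun r => ‖K s r • φ r‖) (Ioo 0 s) volume :=
        ((integrable_indicator_iff measurableSet_Ioo).mp (hslice s hs)).norm
      have hb1 : (∫ r in Ioo (0:ℝ) s, ‖K s r • φ r‖) ≤ ∫ r in Ioo (0:ℝ) s, K s r * M := by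
        refine setIntegral_mono_on hInt1 ((hKint s hs).mul_const M) measurableSet_Ioo
          fun r hr => ?_
        rw [norm_smul, Real.norm_eq_abs, abs_of_nonneg (hKnn hr.1 hr.2 hs.2)]
        exact mul_le_mul_of_nonneg_left (hM r) (hKnn hr.1 hr.2 hs.2)
      have hb2 : (∫ r in Ioo (0:ℝ) s, K s r * M) ≤ M * D s := by
        rw [integral_mul_const, mul_comm]
        exact mul_le_mul_of_nonneg_left (hKD s hs) hM0
      have hnn : 0 ≤ ∫ r in Ioo (0:ℝ) s, ‖K s r • φ r‖ :=
        setIntegral_nonneg measurableSet_Ioo fun r _ => norm_nonneg _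
      rw [Real.norm_of_nonneg hnn]
      linarith
    · have h1 := indicator_slice_zero (t := t) K φ hs
      have he : (∫ r, ‖({p : ℝ × ℝ | 0 < p.2 ∧ p.2 < p.1 ∧ p.1 < t}).indicator
            (fun p => K p.1 p.2 • φ p.2) (s, r)‖) = 0 := by
        have h2 : (fun r => ‖({p : ℝ × ℝ | 0 < p.2 ∧ p.2 < p.1 ∧ p.1 < t}).indicator
            (fun p => K p.1 p.2 • φ p.2) (s, r)‖) = fun _ => (0:ℝ) := by
          funext r; rw [congrFun h1 r, norm_zero]
        rw [h2]; simp
      rw [he, Set.indicator_of_notMem hs, norm_zero]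

variable [CompleteSpace H]

lemma swap_tri {t : ℝ} (ht : 0 ≤ t) (K : ℝ → ℝ → ℝ) (φ : ℝ → H)
    (hF : Integrable
      (({p : ℝ × ℝ | 0 < p.2 ∧ p.2 < p.1 ∧ p.1 < t}).indicator fun p => K p.1 p.2 • φ p.2)
      (volume.prod volume)) :
    (∫ s in (0:ℝ)..t, ∫ r in (0:ℝ)..s, K s r • φ r)
      = ∫ r in (0:ℝ)..t, (∫ s in r..t, K s r) • φ r := by
  have hswap : (∫ s, ∫ r, ({p : ℝ × ℝ | 0 < p.2 ∧ p.2 < p.1 ∧ p.1 < t}).indicator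
        (fun p => K p.1 p.2 • φ p.2) (s, r))
      = ∫ r, ∫ s, ({p : ℝ × ℝ | 0 < p.2 ∧ p.2 < p.1 ∧ p.1 < t}).indicator
        (fun p => K p.1 p.2 • φ p.2) (s, r) := by
    refine MeasureTheory.integral_integral_swap ?_
    exact hF
  have hL : (fun s => ∫ r, ({p : ℝ × ℝ | 0 < p.2 ∧ p.2 < p.1 ∧ p.1 < t}).indicator
        (fun p => K p.1 p.2 • φ p.2) (s, r))
      = (Ioo (0:ℝ) t).indicator (fun s => ∫ r in (0:ℝ)..s, K s r • φ r) := by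
    funext s
    by_cases hs : s ∈ Ioo (0:ℝ) t
    · rw [indicator_slice K φ hs, integral_indicator measurableSet_Ioo,
        Set.indicator_of_mem hs, intervalIntegral.integral_of_le hs.1.le,
        integral_Ioc_eq_integral_Ioo]
    · rw [indicator_slice_zero K φ hs, Set.indicator_of_notMem hs]
      simp
  have hR : (fun r => ∫ s, ({p : ℝ × ℝ | 0 < p.2 ∧ p.2 < p.1 ∧ p.1 < t}).indicator
        (fun p => K p.1 p.2 • φ p.2) (s, r))
      = (Ioo (0:ℝ) t).indicator (fun r => (∫ s in r..t, K s r) • φ r) := by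
    funext r
    by_cases hr : r ∈ Ioo (0:ℝ) t
    · have h1 : (fun s => ({p : ℝ × ℝ | 0 < p.2 ∧ p.2 < p.1 ∧ p.1 < t}).indicator
          (fun p => K p.1 p.2 • φ p.2) (s, r))
          = (Ioo r t).indicator (fun s => K s r • φ r) := by
        funext s
        by_cases hs : s ∈ Ioo r t
        · rw [Set.indicator_of_mem (show ((s, r) : ℝ × ℝ) ∈ {p : ℝ × ℝ | 0 < p.2 ∧ p.2 < p.1 ∧ p.1 < t} from ⟨hr.1, hs.1, hs.2⟩),
            Set.indicator_of_mem hs]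
        · rw [Set.indicator_of_notMem (fun h => hs ⟨h.2.1, h.2.2⟩),
            Set.indicator_of_notMem hs]
      rw [h1, integral_indicator measurableSet_Ioo, Set.indicator_of_mem hr,
        ← integral_Ioc_eq_integral_Ioo, ← intervalIntegral.integral_of_le hr.2.le,
        intervalIntegral.integral_smul_const]
    · have h1 : (fun s => ({p : ℝ × ℝ | 0 < p.2 ∧ p.2 < p.1 ∧ p.1 < t}).indicator
          (fun p => K p.1 p.2 • φ p.2) (s, r)) = fun _ => (0:H) := by
        funext s
        exact Set.indicator_of_notMem (fun h => hr ⟨h.1, lt_trans h.2.1 h.2.2⟩) _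
      rw [h1, Set.indicator_of_notMem hr]
      simp
  rw [hL, hR, integral_indicator measurableSet_Ioo, integral_indicator measurableSet_Ioo]
    at hswap
  rw [intervalIntegral.integral_of_le ht, integral_Ioc_eq_integral_Ioo,
    intervalIntegral.integral_of_le ht, integral_Ioc_eq_integral_Ioo]
  exact hswap

lemma hF2 {α : ℝ} (hα0 : 0 < α) {φ : ℝ → H} (hφ : Continuous φ)
    {M : ℝ} (hM : ∀ x, ‖φ x‖ ≤ M) {t : ℝ} (ht : 0 ≤ t) :
    Integrable (({p : ℝ × ℝ | 0 < p.2 ∧ p.2 < p.1 ∧ p.1 < t}).indicator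
      fun p => ((p.1 - p.2) ^ (α - 1) / Real.Gamma α) • φ p.2) (volume.prod volume) := by
  have hΓ : 0 < Real.Gamma α := Real.Gamma_pos_of_pos hα0
  refine hF_integrable (fun s r => (s - r) ^ (α - 1) / Real.Gamma α) hφ hM
    (((measurable_fst.sub measurable_snd).pow measurable_const).div_const _)
    (fun s r hr hrs hst => div_nonneg (Real.rpow_nonneg (by linarith) _) hΓ.le)
    (fun s hs => ?_) (D := fun _ => t ^ α / (α * Real.Gamma α))
    (integrableOn_const measure_Ioo_lt_top.ne) (fun s hs => ?_)
  · exact (((intervalIntegrable_iff_integrableOn_Ioc_of_le hs.1.le).mp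
      (ker_ii hα0 hs.1.le)).mono_set Ioo_subset_Ioc_self).div_const _
  · have h1 : (∫ r in Ioo (0:ℝ) s, (s - r) ^ (α - 1) / Real.Gamma α)
        = (∫ r in (0:ℝ)..s, (s - r) ^ (α - 1)) / Real.Gamma α := by
      rw [← integral_Ioc_eq_integral_Ioo, ← intervalIntegral.integral_of_le hs.1.le,
        intervalIntegral.integral_div]
    rw [h1, rpow_eval hα0 hs.1.le, sub_zero, div_div]
    exact (div_le_div_iff_of_pos_right (by positivity)).mpr (Real.rpow_le_rpow hs.1.le hs.2.le hα0.le)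

lemma hF3 {α : ℝ} (hα0 : 0 < α) {φ : ℝ → H} (hφ : Continuous φ)
    {M : ℝ} (hM : ∀ x, ‖φ x‖ ≤ M) {t : ℝ} (ht : 0 ≤ t) :
    Integrable (({p : ℝ × ℝ | 0 < p.2 ∧ p.2 < p.1 ∧ p.1 < t}).indicator
      fun p => ((t - p.1) ^ (α - 1) / Real.Gamma α) • φ p.2) (volume.prod volume) := by
  have hΓ : 0 < Real.Gamma α := Real.Gamma_pos_of_pos hα0
  refine hF_integrable (fun s r => (t - s) ^ (α - 1) / Real.Gamma α) hφ hM
    (((measurable_const.sub measurable_fst).pow measurable_const).div_const _)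
    (fun s r hr hrs hst => div_nonneg (Real.rpow_nonneg (by linarith) _) hΓ.le)
    (fun s hs => integrableOn_const measure_Ioo_lt_top.ne)
    (D := fun s => (t - s) ^ (α - 1) / Real.Gamma α * t) ?_ (fun s hs => ?_)
  · exact ((((intervalIntegrable_iff_integrableOn_Ioc_of_le ht).mp
      (ker_ii hα0 ht)).mono_set Ioo_subset_Ioc_self).div_const _).mul_const _
  · rw [setIntegral_const, Real.volume_real_Ioo_of_le hs.1.le, sub_zero,
      smul_eq_mul, mul_comm]
    have hknn : 0 ≤ (t - s) ^ (α - 1) / Real.Gamma α :=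
      div_nonneg (Real.rpow_nonneg (by linarith [hs.2]) _) hΓ.le
    exact mul_le_mul_of_nonneg_left hs.2.le hknn

lemma claim2 {α : ℝ} (hα0 : 0 < α) {φ : ℝ → H} (hφ : Continuous φ)
    {M : ℝ} (hM : ∀ x, ‖φ x‖ ≤ M) {t : ℝ} (ht : 0 ≤ t) :
    (∫ s in (0:ℝ)..t, RL α φ s)
      = ∫ r in (0:ℝ)..t, ((t - r) ^ α / (α * Real.Gamma α)) • φ r := by
  have h := swap_tri ht (fun s r => (s - r) ^ (α - 1) / Real.Gamma α) φ (hF2 hα0 hφ hM ht)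
  refine Eq.trans (by rfl) (h.trans (intervalIntegral.integral_congr fun r hr => ?_))
  rw [uIcc_of_le ht] at hr
  congr 1
  rw [intervalIntegral.integral_div, rpow_eval' hα0 hr.2, div_div]

lemma claim3 {α : ℝ} (hα0 : 0 < α) {φ : ℝ → H} (hφ : Continuous φ)
    {M : ℝ} (hM : ∀ x, ‖φ x‖ ≤ M) {t : ℝ} (ht : 0 ≤ t) :
    RL α (fun s => ∫ r in (0:ℝ)..s, φ r) t
      = ∫ r in (0:ℝ)..t, ((t - r) ^ α / (α * Real.Gamma α)) • φ r := by
  have h := swap_tri ht (fun s r => (t - s) ^ (α - 1) / Real.Gamma α) φ (hF3 hα0 hφ hM ht)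
  have hL : RL α (fun s => ∫ r in (0:ℝ)..s, φ r) t
      = ∫ s in (0:ℝ)..t, ∫ r in (0:ℝ)..s, ((t - s) ^ (α - 1) / Real.Gamma α) • φ r := by
    refine intervalIntegral.integral_congr fun s hs => ?_
    exact (intervalIntegral.integral_smul _ _).symm
  rw [hL, h]
  refine intervalIntegral.integral_congr fun r hr => ?_
  rw [uIcc_of_le ht] at hr
  congr 1
  rw [intervalIntegral.integral_div, rpow_eval hα0 hr.2, div_div]

lemma RL_integrableOn {α : ℝ} (hα0 : 0 < α) {φ : ℝ → H} (hφ : Continuous φ)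
    {M : ℝ} (hM : ∀ x, ‖φ x‖ ≤ M) {t : ℝ} (ht : 0 ≤ t) :
    IntegrableOn (RL α φ) (Ioo 0 t) volume := by
  have h := (hF2 (t := t) hα0 hφ hM ht).integral_prod_left
  rw [← integrable_indicator_iff measurableSet_Ioo]
  refine h.congr (Filter.Eventually.of_forall fun s => ?_)
  by_cases hs : s ∈ Ioo (0:ℝ) t
  · have h1 := indicator_slice (t := t) (fun s r => (s - r) ^ (α - 1) / Real.Gamma α) φ hs
    calc (∫ r, ({p : ℝ × ℝ | 0 < p.2 ∧ p.2 < p.1 ∧ p.1 < t}).indicator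
          (fun p => ((p.1 - p.2) ^ (α - 1) / Real.Gamma α) • φ p.2) (s, r))
        = ∫ r, (Ioo (0:ℝ) s).indicator
            (fun r => ((s - r) ^ (α - 1) / Real.Gamma α) • φ r) r :=
          congrArg (fun f : ℝ → H => ∫ r, f r) h1
      _ = ∫ r in Ioo (0:ℝ) s, ((s - r) ^ (α - 1) / Real.Gamma α) • φ r :=
          integral_indicator measurableSet_Ioo
      _ = RL α φ s := by
          rw [← integral_Ioc_eq_integral_Ioo, ← intervalIntegral.integral_of_le hs.1.le]; rfl
      _ = (Ioo (0:ℝ) t).indicator (RL α φ) s := (Set.indicator_of_mem hs _).symm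
  · have h1 := indicator_slice_zero (t := t) (fun s r => (s - r) ^ (α - 1) / Real.Gamma α) φ hs
    calc (∫ r, ({p : ℝ × ℝ | 0 < p.2 ∧ p.2 < p.1 ∧ p.1 < t}).indicator
          (fun p => ((p.1 - p.2) ^ (α - 1) / Real.Gamma α) • φ p.2) (s, r))
        = ∫ r, (0:H) := congrArg (fun f : ℝ → H => ∫ r, f r) h1
      _ = 0 := integral_zero _ _
      _ = (Ioo (0:ℝ) t).indicator (RL α φ) s := (Set.indicator_of_notMem hs _).symm

end Stmt12Aux

open Stmt12Aux in
theorem stmt_12 {H : Type*} [NormedAddCommGroup H] [InnerProductSpace ℝ H] [CompleteSpace H]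
    (α T : ℝ) (hα0 : 0 < α) (hα1 : α < 1) (hT : 0 < T)
    (A : H →L[ℝ] H →L[ℝ] ℝ)
    (θ ρ : ℝ → H)
    (hθ : ContinuousOn θ (Icc 0 T)) (hρ : ContinuousOn ρ (Icc 0 T))
    (heq : ∀ t ∈ Icc (0:ℝ) T, ∀ χ : H, ⟪θ t, χ⟫ + A (RL α θ t) χ = ⟪ρ t, χ⟫)
    (hpos : ∀ ψ : ℝ → H, ContinuousOn ψ (Icc 0 T) →
      ∀ t ∈ Icc (0:ℝ) T, 0 ≤ ∫ s in (0:ℝ)..t, A (RL α ψ s) (ψ s)) :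
    ∀ t ∈ Icc (0:ℝ) T,
      ∫ s in (0:ℝ)..t, s ^ 2 * ‖θ s‖ ^ 2
        ≤ 3 * ∫ s in (0:ℝ)..t,
            (s ^ 2 * ‖ρ s‖ ^ 2 + 2 * (∫ r in (0:ℝ)..s, ‖ρ r‖) ^ 2) := by
  intro t htmem
  obtain ⟨ht0, htT⟩ := htmem
  have hΓ : 0 < Real.Gamma α := Real.Gamma_pos_of_pos hα0
  -- clamp to [0, T]
  set c : ℝ → ℝ := fun x => max 0 (min x T) with hc
  have hccont : Continuous c := continuous_const.max (continuous_id.min continuous_const)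
  have hcmem : ∀ x, c x ∈ Icc (0:ℝ) T := fun x =>
    ⟨le_max_left _ _, max_le hT.le (min_le_right _ _)⟩
  have hceq : ∀ x ∈ Icc (0:ℝ) T, c x = x := fun x hx => by
    rw [hc]; dsimp only; rw [min_eq_left hx.2, max_eq_right hx.1]
  set θ' : ℝ → H := θ ∘ c with hθ'def
  set ρ' : ℝ → H := ρ ∘ c with hρ'def
  have hθ'cont : Continuous θ' := hθ.comp_continuous hccont hcmem
  have hρ'cont : Continuous ρ' := hρ.comp_continuous hccont hcmem
  have hθ'eq : ∀ x ∈ Icc (0:ℝ) T, θ' x = θ x := fun x hx => by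
    rw [hθ'def]; simp only [Function.comp_apply]; rw [hceq x hx]
  have hρ'eq : ∀ x ∈ Icc (0:ℝ) T, ρ' x = ρ x := fun x hx => by
    rw [hρ'def]; simp only [Function.comp_apply]; rw [hceq x hx]
  obtain ⟨Mθ, hMθ⟩ : ∃ M, ∀ x, ‖θ' x‖ ≤ M := by
    obtain ⟨M, hM⟩ := isCompact_Icc.exists_bound_of_continuousOn hθ
    exact ⟨M, fun x => hM (c x) (hcmem x)⟩
  -- abbreviations
  set Θ : ℝ → H := fun s => ∫ r in (0:ℝ)..s, θ' r with hΘdef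
  set Rv : ℝ → H := fun s => ∫ r in (0:ℝ)..s, ρ' r with hRvdef
  set rn : ℝ → ℝ := fun s => ∫ r in (0:ℝ)..s, ‖ρ' r‖ with hrndef
  set ψ : ℝ → H := fun s => s • θ' s with hψdef
  set G : ℝ → H := fun s => ∫ r in (0:ℝ)..s, ((s - r) ^ α / (α * Real.Gamma α)) • θ' r
    with hGdef
  have hΘcont : Continuous Θ :=
    intervalIntegral.continuous_primitive (fun a b => hθ'cont.intervalIntegrable a b) 0
  have hRvcont : Continuous Rv :=
    intervalIntegral.continuous_primitive (fun a b => hρ'cont.intervalIntegrable a b) 0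
  have hrncont : Continuous rn :=
    intervalIntegral.continuous_primitive (fun a b => hρ'cont.norm.intervalIntegrable a b) 0
  have hψcont : Continuous ψ := continuous_id.smul hθ'cont
  have hRLθ : ∀ s ∈ Icc (0:ℝ) T, RL α θ' s = RL α θ s := by
    intro s hs
    refine intervalIntegral.integral_congr fun r hr => ?_
    rw [uIcc_of_le hs.1] at hr
    rw [hθ'eq r ⟨hr.1, hr.2.trans hs.2⟩]
  have hclaim2 : ∀ s : ℝ, 0 ≤ s → (∫ u in (0:ℝ)..s, RL α θ' u) = G s :=
    fun s hs => claim2 hα0 hθ'cont hMθ hs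
  have hclaim3 : ∀ s : ℝ, 0 ≤ s → RL α Θ s = G s :=
    fun s hs => claim3 hα0 hθ'cont hMθ hs
  have hRLii : ∀ s : ℝ, 0 ≤ s → IntervalIntegrable (RL α θ') volume 0 s := by
    intro s hs
    rw [intervalIntegrable_iff_integrableOn_Ioc_of_le hs]
    exact (RL_integrableOn hα0 hθ'cont hMθ hs).congr_set_ae Ioo_ae_eq_Ioc.symm
  have hkeyG : ∀ s ∈ Icc (0:ℝ) T, ∀ χ : H, A (G s) χ = ⟪Rv s - Θ s, χ⟫ := by
    intro s hs χ
    have hcomp := (A.flip χ).intervalIntegral_comp_comm (hRLii s hs.1)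
    have hiρ : IntervalIntegrable (fun u => (⟪ρ' u, χ⟫ : ℝ)) volume 0 s :=
      (hρ'cont.inner continuous_const).intervalIntegrable _ _
    have hiθ : IntervalIntegrable (fun u => (⟪θ' u, χ⟫ : ℝ)) volume 0 s :=
      (hθ'cont.inner continuous_const).intervalIntegrable _ _
    have e1 : (∫ u in (0:ℝ)..s, (⟪ρ' u, χ⟫ : ℝ)) = ⟪Rv s, χ⟫ := by
      have h := (innerSL ℝ χ).intervalIntegral_comp_comm (hρ'cont.intervalIntegrable (μ := volume) 0 s)
      simp only [innerSL_apply_apply] at h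
      calc (∫ u in (0:ℝ)..s, (⟪ρ' u, χ⟫ : ℝ))
          = ∫ u in (0:ℝ)..s, (⟪χ, ρ' u⟫ : ℝ) :=
            intervalIntegral.integral_congr fun u _ => real_inner_comm _ _
        _ = ⟪χ, Rv s⟫ := h
        _ = ⟪Rv s, χ⟫ := real_inner_comm _ _
    have e2 : (∫ u in (0:ℝ)..s, (⟪θ' u, χ⟫ : ℝ)) = ⟪Θ s, χ⟫ := by
      have h := (innerSL ℝ χ).intervalIntegral_comp_comm (hθ'cont.intervalIntegrable (μ := volume) 0 s)
      simp only [innerSL_apply_apply] at h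
      calc (∫ u in (0:ℝ)..s, (⟪θ' u, χ⟫ : ℝ))
          = ∫ u in (0:ℝ)..s, (⟪χ, θ' u⟫ : ℝ) :=
            intervalIntegral.integral_congr fun u _ => real_inner_comm _ _
        _ = ⟪χ, Θ s⟫ := h
        _ = ⟪Θ s, χ⟫ := real_inner_comm _ _
    calc A (G s) χ = (A.flip χ) (∫ u in (0:ℝ)..s, RL α θ' u) := by
          rw [hclaim2 s hs.1]; rfl
      _ = ∫ u in (0:ℝ)..s, (A.flip χ) (RL α θ' u) := hcomp.symm
      _ = ∫ u in (0:ℝ)..s, ((⟪ρ' u, χ⟫ : ℝ) - ⟪θ' u, χ⟫) := by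
          refine intervalIntegral.integral_congr fun u hu => ?_
          rw [uIcc_of_le hs.1] at hu
          have huT : u ∈ Icc (0:ℝ) T := ⟨hu.1, hu.2.trans hs.2⟩
          have h0 := heq u huT χ
          have : (A.flip χ) (RL α θ' u) = A (RL α θ u) χ := by rw [hRLθ u huT]; rfl
          rw [this, hθ'eq u huT, hρ'eq u huT]
          linarith
      _ = (∫ u in (0:ℝ)..s, (⟪ρ' u, χ⟫ : ℝ)) - ∫ u in (0:ℝ)..s, (⟪θ' u, χ⟫ : ℝ) :=
          intervalIntegral.integral_sub hiρ hiθ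
      _ = ⟪Rv s, χ⟫ - ⟪Θ s, χ⟫ := by rw [e1, e2]
      _ = ⟪Rv s - Θ s, χ⟫ := (inner_sub_left _ _ _).symm
  have hclaim1 : ∀ s : ℝ, 0 ≤ s → s • RL α θ' s = RL α ψ s + α • G s := by
    intro s hs
    have i1 : IntervalIntegrable (fun r => ((s - r) ^ (α - 1) / Real.Gamma α) • ψ r)
        volume 0 s := RL_integrand_ii hα0 hψcont hs _
    have i2 : IntervalIntegrable (fun r => ((s - r) ^ α / (α * Real.Gamma α)) • θ' r)
        volume 0 s := by
      have h := RL_integrand_ii (β := α + 1) (by linarith) hθ'cont hs (α * Real.Gamma α)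
      simpa using h
    have hL : s • RL α θ' s
        = ∫ r in (0:ℝ)..s, s • (((s - r) ^ (α - 1) / Real.Gamma α) • θ' r) :=
      (intervalIntegral.integral_smul s _).symm
    have i2' : IntervalIntegrable
        (fun r => α • (((s - r) ^ α / (α * Real.Gamma α)) • θ' r)) volume 0 s := i2.smul α
    have hR : RL α ψ s + α • G s
        = ∫ r in (0:ℝ)..s, (((s - r) ^ (α - 1) / Real.Gamma α) • ψ r
            + α • (((s - r) ^ α / (α * Real.Gamma α)) • θ' r)) := by
      rw [hGdef]
      rw [intervalIntegral.integral_add i1 i2']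
      congr 1
      exact (intervalIntegral.integral_smul α _).symm
    rw [hL, hR]
    refine intervalIntegral.integral_congr fun r hr => ?_
    rw [uIcc_of_le hs] at hr
    have key : (s - r) * (s - r) ^ (α - 1) = (s - r) ^ α := by
      rcases eq_or_lt_of_le hr.2 with h | h
      · rw [← h, sub_self, Real.zero_rpow hα0.ne', zero_mul]
      · have hx : s - r ≠ 0 := (sub_pos.mpr h).ne'
        calc (s - r) * (s - r) ^ (α - 1) = (s - r) ^ (α - 1) * (s - r) := mul_comm _ _
          _ = (s - r) ^ (α - 1 + 1) := (Real.rpow_add_one hx _).symm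
          _ = (s - r) ^ α := by norm_num
    have hψr : ψ r = r • θ' r := rfl
    rw [hψr, smul_smul, smul_smul, smul_smul, ← add_smul]
    congr 1
    have h2 : α * ((s - r) ^ α / (α * Real.Gamma α)) = (s - r) ^ α / Real.Gamma α := by
      field_simp
    rw [h2, ← key]
    ring
  clear_value θ' ρ' Θ Rv rn ψ G
  have hE : ∀ s ∈ Icc (0:ℝ) T,
      A (RL α ψ s) (ψ s)
        = s ^ 2 * ⟪ρ' s, θ' s⟫ - s ^ 2 * ‖θ' s‖ ^ 2 - α * (s * ⟪Rv s - Θ s, θ' s⟫) := by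
    intro s hs
    have h0 := heq s hs (ψ s)
    rw [← hθ'eq s hs, ← hρ'eq s hs, ← hRLθ s hs] at h0
    have h2 : s * (A (RL α θ' s) (ψ s))
        = A (RL α ψ s) (ψ s) + α * (A (G s) (ψ s)) := by
      have ha : s * (A (RL α θ' s) (ψ s)) = A (s • RL α θ' s) (ψ s) := by
        conv_rhs => rw [_root_.map_smul, ContinuousLinearMap.smul_apply]
        rw [smul_eq_mul]
      rw [ha, hclaim1 s hs.1, _root_.map_add, ContinuousLinearMap.add_apply]
      congr 1
      conv_lhs => rw [_root_.map_smul, ContinuousLinearMap.smul_apply]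
      rw [smul_eq_mul]
    have h3 : A (G s) (ψ s) = s * ⟪Rv s - Θ s, θ' s⟫ := by
      rw [hkeyG s hs (ψ s), hψdef]
      simp [real_inner_smul_right]
    have h4 : (⟪θ' s, ψ s⟫ : ℝ) = s * ‖θ' s‖ ^ 2 := by
      rw [hψdef]
      simp [real_inner_smul_right, real_inner_self_eq_norm_sq]
    have h5 : (⟪ρ' s, ψ s⟫ : ℝ) = s * ⟪ρ' s, θ' s⟫ := by
      rw [hψdef]
      simp [real_inner_smul_right]
    have h1 : s * (⟪θ' s, ψ s⟫ : ℝ) + s * (A (RL α θ' s) (ψ s)) = s * ⟪ρ' s, ψ s⟫ := by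
      rw [← mul_add, h0]
    rw [h4, h5, h2, h3] at h1
    nlinarith [h1]
  -- positivity applied to Θ
  have hrn0 : ∀ s : ℝ, 0 ≤ s → 0 ≤ rn s := fun s hs => by
    rw [hrndef]
    exact intervalIntegral.integral_nonneg hs fun r _ => norm_nonneg _
  have hRvrn : ∀ s : ℝ, 0 ≤ s → ‖Rv s‖ ≤ rn s := fun s hs => by
    rw [hRvdef, hrndef]
    exact intervalIntegral.norm_integral_le_integral_norm hs
  have hiΘ2 : IntervalIntegrable (fun s => ‖Θ s‖ ^ 2) volume 0 t :=
    ((hΘcont.norm.pow 2)).intervalIntegrable _ _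
  have hirn2 : IntervalIntegrable (fun s => rn s ^ 2) volume 0 t :=
    ((hrncont.pow 2)).intervalIntegrable _ _
  have hΘbound : (∫ s in (0:ℝ)..t, ‖Θ s‖ ^ 2) ≤ ∫ s in (0:ℝ)..t, rn s ^ 2 := by
    have hposΘ := hpos Θ hΘcont.continuousOn t ⟨ht0, htT⟩
    have hcongr : (∫ s in (0:ℝ)..t, A (RL α Θ s) (Θ s))
        = ∫ s in (0:ℝ)..t, ((⟪Rv s, Θ s⟫ : ℝ) - ‖Θ s‖ ^ 2) := by
      refine intervalIntegral.integral_congr fun s hs => ?_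
      rw [uIcc_of_le ht0] at hs
      rw [hclaim3 s hs.1, hkeyG s ⟨hs.1, hs.2.trans htT⟩ (Θ s), inner_sub_left,
        real_inner_self_eq_norm_sq]
    rw [hcongr] at hposΘ
    have hiRΘ : IntervalIntegrable (fun s => (⟪Rv s, Θ s⟫ : ℝ)) volume 0 t :=
      (hRvcont.inner hΘcont).intervalIntegrable _ _
    rw [intervalIntegral.integral_sub hiRΘ hiΘ2] at hposΘ
    have hmono : (∫ s in (0:ℝ)..t, (⟪Rv s, Θ s⟫ : ℝ))
        ≤ ∫ s in (0:ℝ)..t, (rn s ^ 2 / 2 + ‖Θ s‖ ^ 2 / 2) := by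
      refine intervalIntegral.integral_mono_on ht0 hiRΘ
        (((hrncont.pow 2).div_const 2).add
          ((hΘcont.norm.pow 2).div_const 2) |>.intervalIntegrable _ _) fun s hs => ?_
      have h1 : (⟪Rv s, Θ s⟫ : ℝ) ≤ ‖Rv s‖ * ‖Θ s‖ := real_inner_le_norm _ _
      have h2 := hRvrn s hs.1
      have h3 : (0:ℝ) ≤ ‖Θ s‖ := norm_nonneg _
      nlinarith [sq_nonneg (rn s - ‖Θ s‖), norm_nonneg (Rv s)]
    rw [intervalIntegral.integral_add (hirn2.div_const 2) (hiΘ2.div_const 2)] at hmono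
    rw [intervalIntegral.integral_div, intervalIntegral.integral_div] at hmono
    linarith
  -- positivity applied to ψ
  have hposψ := hpos ψ hψcont.continuousOn t ⟨ht0, htT⟩
  have hcong2 : (∫ s in (0:ℝ)..t, A (RL α ψ s) (ψ s))
      = ∫ s in (0:ℝ)..t, (s ^ 2 * ⟪ρ' s, θ' s⟫ - s ^ 2 * ‖θ' s‖ ^ 2
          - α * (s * ⟪Rv s - Θ s, θ' s⟫)) := by
    refine intervalIntegral.integral_congr fun s hs => ?_
    rw [uIcc_of_le ht0] at hs
    exact hE s ⟨hs.1, hs.2.trans htT⟩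
  rw [hcong2] at hposψ
  have c1 : Continuous fun s : ℝ => s ^ 2 * ⟪ρ' s, θ' s⟫ :=
    (continuous_id.pow 2).mul (hρ'cont.inner hθ'cont)
  have c2 : Continuous fun s : ℝ => s ^ 2 * ‖θ' s‖ ^ 2 :=
    (continuous_id.pow 2).mul (hθ'cont.norm.pow 2)
  have c3 : Continuous fun s : ℝ => α * (s * ⟪Rv s - Θ s, θ' s⟫) :=
    continuous_const.mul (continuous_id.mul ((hRvcont.sub hΘcont).inner hθ'cont))
  rw [intervalIntegral.integral_sub (show
      IntervalIntegrable (fun s => s ^ 2 * ⟪ρ' s, θ' s⟫ - s ^ 2 * ‖θ' s‖ ^ 2) volume 0 t from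
      (c1.sub c2).intervalIntegrable _ _)
    (c3.intervalIntegrable _ _), intervalIntegral.integral_sub
    (c1.intervalIntegrable _ _) (c2.intervalIntegrable _ _)] at hposψ
  -- pointwise bound
  have hpt : ∀ s ∈ Icc (0:ℝ) t,
      s ^ 2 * ⟪ρ' s, θ' s⟫ - α * (s * ⟪Rv s - Θ s, θ' s⟫)
        ≤ 3 / 2 * (s ^ 2 * ‖ρ' s‖ ^ 2) + 3 / 2 * ‖Θ s‖ ^ 2 + 3 / 2 * rn s ^ 2
          + 1 / 2 * (s ^ 2 * ‖θ' s‖ ^ 2) := by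
    intro s hs
    have hs0 : 0 ≤ s := hs.1
    have hρθ : (⟪ρ' s, θ' s⟫ : ℝ) ≤ ‖ρ' s‖ * ‖θ' s‖ := real_inner_le_norm _ _
    have habs : |(⟪Rv s - Θ s, θ' s⟫ : ℝ)| ≤ ‖Rv s - Θ s‖ * ‖θ' s‖ :=
      abs_real_inner_le_norm _ _
    have hsub : ‖Rv s - Θ s‖ ≤ rn s + ‖Θ s‖ := by
      have := hRvrn s hs0
      have h4 := norm_sub_le (Rv s) (Θ s)
      linarith
    have hX : -(⟪Rv s - Θ s, θ' s⟫ : ℝ) ≤ (rn s + ‖Θ s‖) * ‖θ' s‖ := by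
      have h5 : ‖Rv s - Θ s‖ * ‖θ' s‖ ≤ (rn s + ‖Θ s‖) * ‖θ' s‖ :=
        mul_le_mul_of_nonneg_right hsub (norm_nonneg _)
      have h6 := neg_abs_le (⟪Rv s - Θ s, θ' s⟫ : ℝ)
      linarith
    have hf3 : -(α * (s * ⟪Rv s - Θ s, θ' s⟫)) ≤ s * ((rn s + ‖Θ s‖) * ‖θ' s‖) := by
      have h7 : α * (s * -(⟪Rv s - Θ s, θ' s⟫ : ℝ))
          ≤ α * (s * ((rn s + ‖Θ s‖) * ‖θ' s‖)) :=
        mul_le_mul_of_nonneg_left (mul_le_mul_of_nonneg_left hX hs0) hα0.le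
      have h8 : α * (s * ((rn s + ‖Θ s‖) * ‖θ' s‖)) ≤ 1 * (s * ((rn s + ‖Θ s‖) * ‖θ' s‖)) := by
        refine mul_le_mul_of_nonneg_right hα1.le ?_
        have := hrn0 s hs0
        positivity
      nlinarith [h7, h8]
    have he1 : s ^ 2 * (⟪ρ' s, θ' s⟫ : ℝ) ≤ (s * ‖ρ' s‖) * (s * ‖θ' s‖) := by
      have := mul_le_mul_of_nonneg_left hρθ (sq_nonneg s)
      nlinarith [this]
    nlinarith [sq_nonneg (3 * (s * ‖ρ' s‖) - s * ‖θ' s‖),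
      sq_nonneg (3 * ‖Θ s‖ - s * ‖θ' s‖), sq_nonneg (3 * rn s - s * ‖θ' s‖),
      he1, hf3]
  have hsplit : (∫ s in (0:ℝ)..t, s ^ 2 * ⟪ρ' s, θ' s⟫)
        - (∫ s in (0:ℝ)..t, α * (s * ⟪Rv s - Θ s, θ' s⟫))
      ≤ 3 / 2 * (∫ s in (0:ℝ)..t, s ^ 2 * ‖ρ' s‖ ^ 2) + 3 / 2 * (∫ s in (0:ℝ)..t, ‖Θ s‖ ^ 2)
        + 3 / 2 * (∫ s in (0:ℝ)..t, rn s ^ 2)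
        + 1 / 2 * ∫ s in (0:ℝ)..t, s ^ 2 * ‖θ' s‖ ^ 2 := by
    have cρ2 : Continuous fun s : ℝ => s ^ 2 * ‖ρ' s‖ ^ 2 :=
      (continuous_id.pow 2).mul (hρ'cont.norm.pow 2)
    have hbig : (∫ s in (0:ℝ)..t, (s ^ 2 * ⟪ρ' s, θ' s⟫ - α * (s * ⟪Rv s - Θ s, θ' s⟫)))
        ≤ ∫ s in (0:ℝ)..t, (3 / 2 * (s ^ 2 * ‖ρ' s‖ ^ 2) + 3 / 2 * ‖Θ s‖ ^ 2
            + 3 / 2 * rn s ^ 2 + 1 / 2 * (s ^ 2 * ‖θ' s‖ ^ 2)) := by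
      refine intervalIntegral.integral_mono_on ht0
        ((c1.sub c3).intervalIntegrable _ _)
        (((((continuous_const.mul cρ2).add
            (continuous_const.mul (hΘcont.norm.pow 2))).add
            (continuous_const.mul (hrncont.pow 2))).add
            (continuous_const.mul c2)).intervalIntegrable _ _) hpt
    rw [intervalIntegral.integral_sub (c1.intervalIntegrable _ _)
      (c3.intervalIntegrable _ _)] at hbig
    have iA : IntervalIntegrable (fun s : ℝ => 3 / 2 * (s ^ 2 * ‖ρ' s‖ ^ 2)) volume 0 t :=
      (continuous_const.mul cρ2).intervalIntegrable 0 t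
    have iB : IntervalIntegrable (fun s : ℝ => 3 / 2 * ‖Θ s‖ ^ 2) volume 0 t :=
      (continuous_const.mul (hΘcont.norm.pow 2)).intervalIntegrable 0 t
    have iC : IntervalIntegrable (fun s : ℝ => 3 / 2 * rn s ^ 2) volume 0 t :=
      (continuous_const.mul (hrncont.pow 2)).intervalIntegrable 0 t
    have iD : IntervalIntegrable (fun s : ℝ => 1 / 2 * (s ^ 2 * ‖θ' s‖ ^ 2)) volume 0 t :=
      (continuous_const.mul c2).intervalIntegrable 0 t
    rw [intervalIntegral.integral_add ((iA.add iB).add iC) iD,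
      intervalIntegral.integral_add (iA.add iB) iC,
      intervalIntegral.integral_add iA iB,
      intervalIntegral.integral_const_mul ((3:ℝ)/2) (fun s : ℝ => s ^ 2 * ‖ρ' s‖ ^ 2),
      intervalIntegral.integral_const_mul ((3:ℝ)/2) (fun s : ℝ => ‖Θ s‖ ^ 2),
      intervalIntegral.integral_const_mul ((3:ℝ)/2) (fun s : ℝ => rn s ^ 2),
      intervalIntegral.integral_const_mul ((1:ℝ)/2) (fun s : ℝ => s ^ 2 * ‖θ' s‖ ^ 2)] at hbig
    exact hbig
  -- convert the target integrals
  have hLHS : (∫ s in (0:ℝ)..t, s ^ 2 * ‖θ s‖ ^ 2) = ∫ s in (0:ℝ)..t, s ^ 2 * ‖θ' s‖ ^ 2 := by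
    refine intervalIntegral.integral_congr fun s hs => ?_
    rw [uIcc_of_le ht0] at hs
    rw [hθ'eq s ⟨hs.1, hs.2.trans htT⟩]
  have hRHS : (∫ s in (0:ℝ)..t, (s ^ 2 * ‖ρ s‖ ^ 2 + 2 * (∫ r in (0:ℝ)..s, ‖ρ r‖) ^ 2))
      = (∫ s in (0:ℝ)..t, s ^ 2 * ‖ρ' s‖ ^ 2) + 2 * ∫ s in (0:ℝ)..t, rn s ^ 2 := by
    have hcg : (∫ s in (0:ℝ)..t, (s ^ 2 * ‖ρ s‖ ^ 2 + 2 * (∫ r in (0:ℝ)..s, ‖ρ r‖) ^ 2))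
        = ∫ s in (0:ℝ)..t, (s ^ 2 * ‖ρ' s‖ ^ 2 + 2 * rn s ^ 2) := by
      refine intervalIntegral.integral_congr fun s hs => ?_
      rw [uIcc_of_le ht0] at hs
      have hsT : s ∈ Icc (0:ℝ) T := ⟨hs.1, hs.2.trans htT⟩
      have hn : (∫ r in (0:ℝ)..s, ‖ρ r‖) = rn s := by
        rw [hrndef]
        refine intervalIntegral.integral_congr fun r hr => ?_
        rw [uIcc_of_le hs.1] at hr
        rw [hρ'eq r ⟨hr.1, hr.2.trans hsT.2⟩]
      rw [hρ'eq s hsT, hn]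
    rw [hcg]
    have cρ2 : Continuous fun s : ℝ => s ^ 2 * ‖ρ' s‖ ^ 2 :=
      (continuous_id.pow 2).mul (hρ'cont.norm.pow 2)
    rw [intervalIntegral.integral_add (cρ2.intervalIntegrable _ _)
      (show IntervalIntegrable (fun s => 2 * rn s ^ 2) volume 0 t from
        (continuous_const.mul (hrncont.pow 2)).intervalIntegrable _ _),
      intervalIntegral.integral_const_mul]
  rw [hLHS, hRHS]
  linarith [hposψ, hsplit, hΘbound]
end
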